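/- Consider the extended Ishii system ẋ = y, ẏ = z, ż = 12xy + A for a constant A, with Kahan update (x'-x)/h = (y+y')/2, (y'-y)/h = (z+z')/2, (z'-z)/h = 6(xy'+x'y) + A. Then the quantity I(x,y,z) = z - 6x² + (3/2)h²y² satisfies I(x',y',z') = I(x,y,z) + hA. -/
import Mathlib

/-- For the extended Ishii system `ẋ = y, ẏ = z, ż = 12xy + A`,
the Kahan update changes `I(x,y,z) = z - 6x² + (3/2)h²y²` by exactly `hA`. -/
theorem kahan_extended_ishii (A h x y z x' y' z' : ℝ) (hh : h ≠ 0)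
    (e₁ : (x' - x) / h = (y + y') / 2)
    (e₂ : (y' - y) / h = (z + z') / 2)
    (e₃ : (z' - z) / h = 6 * (x * y' + x' * y) + A) :
    z' - 6 * x'^2 + (3/2) * h^2 * y'^2 =
      (z - 6 * x^2 + (3/2) * h^2 * y^2) + h * A := by
  have h1 : x' - x = h * (y + y') / 2 := by field_simp at e₁; linarith
  have h2 : y' - y = h * (z + z') / 2 := by field_simp at e₂; linarith
  have h3 : z' - z = h * (6 * (x * y' + x' * y) + A) := by field_simp at e₃; linarith
  linear_combination h3 - 6*(x'+x)*h1 + (3/2)*h^2*(y'+y)*h2 - 3*h*(x'-x)*h2 - (3/2)*h^2*(z+z')*h1
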